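/- arXiv:2302.12016 — 6 statements merged into one kernel-verified Lean document; each statement's English description precedes it below -/
import Mathlib

section
/- Let (X,d) and (Y,∂) be metric spaces and let f : X → Y and g : Y → X be coarse Lipschitz maps with g∘f ∼_∞ Id_X. Then for each x0 ∈ X and each θ > 0 there exists L > 0 such that for all x, x' ∈ X: if d(x,x') > θ·max{d(x,x0), d(x',x0)}, then ∂(f(x),f(x')) ≥ (1/L)·d(x,x') − L. -/
/-- A map between (pseudo)metric spaces is coarse Lipschitz if there is `L > 0` with
`∂(f x, f x') ≤ L · d(x, x') + L` for all `x, x'`. -/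
def CoarseLipschitz {X Y : Type*} [PseudoMetricSpace X] [PseudoMetricSpace Y]
    (f : X → Y) : Prop :=
  ∃ L > (0 : ℝ), ∀ x x' : X, dist (f x) (f x') ≤ L * dist x x' + L

/-- Maps `f g : X → Y` are asymptotically close, `f ∼_∞ g`, if either `X` is bounded, or
for some basepoint `x0`: for every `ε > 0` there is `R > 0` such that
`∂(f x, g x) ≤ ε · d(x, x0)` whenever `d(x, x0) ≥ R`. -/
def AsympClose {X Y : Type*} [PseudoMetricSpace X] [PseudoMetricSpace Y]
    (f g : X → Y) : Prop :=
  Bornology.IsBounded (Set.univ : Set X) ∨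
    ∃ x0 : X, ∀ ε > (0 : ℝ), ∃ R > (0 : ℝ), ∀ x : X,
      R ≤ dist x x0 → dist (f x) (g x) ≤ ε * dist x x0

/-- `f : X → Y` is an asymptotic coarse Lipschitz equivalence with asymptotic coarse
Lipschitz inverse `g : Y → X` if `f` and `g` are coarse Lipschitz, `g ∘ f ∼_∞ Id_X` and
`f ∘ g ∼_∞ Id_Y`. -/
def AsympCLInverse {X Y : Type*} [PseudoMetricSpace X] [PseudoMetricSpace Y]
    (f : X → Y) (g : Y → X) : Prop :=
  CoarseLipschitz f ∧ CoarseLipschitz g ∧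
    AsympClose (g ∘ f) id ∧ AsympClose (f ∘ g) id

/-- `f` is an asymptotic coarse Lipschitz equivalence if it admits an asymptotic coarse
Lipschitz inverse. -/
def IsAsympCLEquiv {X Y : Type*} [PseudoMetricSpace X] [PseudoMetricSpace Y]
    (f : X → Y) : Prop :=
  ∃ g : Y → X, AsympCLInverse f g

/-- Metric spaces `X` and `Y` are asymptotically coarse Lipschitz equivalent. -/
def AsympCLEquivalent (X Y : Type*) [PseudoMetricSpace X] [PseudoMetricSpace Y] : Prop :=
  ∃ f : X → Y, IsAsympCLEquiv f

/-- If `f : X → Y` and `g : Y → X` are coarse Lipschitz with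
`g ∘ f ∼_∞ Id_X`, then for each `x0 ∈ X` and `θ > 0` there is `L > 0` such that for all
`x, x'`: if `d(x,x') > θ·max{d(x,x0), d(x',x0)}` then `∂(f x, f x') ≥ d(x,x')/L − L`. -/
theorem asympCL_lower_bound {X Y : Type*} [MetricSpace X] [MetricSpace Y]
    (f : X → Y) (g : Y → X) (hf : CoarseLipschitz f) (hg : CoarseLipschitz g)
    (hgf : AsympClose (g ∘ f) id) (x0 : X) (θ : ℝ) (hθ : 0 < θ) :
    ∃ L > (0 : ℝ), ∀ x x' : X,
      dist x x' > θ * max (dist x x0) (dist x' x0) →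
      dist (f x) (f x') ≥ (1 / L) * dist x x' - L := by
  obtain ⟨Lf, hLf, hfL⟩ := hf
  obtain ⟨Lg, hLg, hgL⟩ := hg
  rcases hgf with hb | ⟨x1, h⟩
  · rw [Metric.isBounded_iff] at hb
    obtain ⟨D, hD⟩ := hb
    have hL1 : (1:ℝ) ≤ max D 1 := le_max_right _ _
    have hLpos : (0:ℝ) < max D 1 := lt_of_lt_of_le one_pos hL1
    refine ⟨max D 1, hLpos, ?_⟩
    intro x x' _
    have hd : dist x x' ≤ D := hD (Set.mem_univ x) (Set.mem_univ x')
    have hLD : D ≤ max D 1 := le_max_left _ _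
    have h0 : (0:ℝ) ≤ dist (f x) (f x') := dist_nonneg
    rw [ge_iff_le, sub_le_iff_le_add, one_div, inv_mul_le_iff₀ hLpos]
    nlinarith
  · obtain ⟨R, hR, hRc⟩ := h (θ/4) (by positivity)
    set c := dist x0 x1 with hc
    have hc0 : 0 ≤ c := dist_nonneg
    set M := Lg*(Lf*R+Lf) + Lg + dist (g (f x1)) x1 + R with hM
    have hM0 : 0 ≤ M := by positivity
    have key : ∀ x : X, dist (g (f x)) x ≤ (θ/4) * dist x x1 + M := by
      intro x
      rcases le_or_gt R (dist x x1) with hx | hx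
      · have hth := hRc x hx
        simp only [Function.comp_apply, id_eq] at hth
        linarith
      · have h1 : dist (g (f x)) x ≤
            dist (g (f x)) (g (f x1)) + dist (g (f x1)) x1 + dist x1 x := by
          calc dist (g (f x)) x ≤ dist (g (f x)) x1 + dist x1 x := dist_triangle _ _ _
          _ ≤ dist (g (f x)) (g (f x1)) + dist (g (f x1)) x1 + dist x1 x := by
              linarith [dist_triangle (g (f x)) (g (f x1)) x1]
        have h2 : dist (g (f x)) (g (f x1)) ≤ Lg * dist (f x) (f x1) + Lg := hgL _ _
        have h3 : dist (f x) (f x1) ≤ Lf * dist x x1 + Lf := hfL _ _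
        have h4 : dist x1 x = dist x x1 := dist_comm _ _
        have hdx : (0:ℝ) ≤ dist x x1 := dist_nonneg
        have hθ4 : (0:ℝ) ≤ θ/4 * dist x x1 := by positivity
        nlinarith [mul_le_mul_of_nonneg_left hx.le (mul_nonneg hLg.le hLf.le),
          mul_le_mul_of_nonneg_left h3 hLg.le]
    set C := θ*c/2 + 2*M + Lg with hC
    have hC0 : 0 < C := by positivity
    set L := max (2*Lg) (max (2*C) 1) with hL
    have hL1 : (1:ℝ) ≤ L := le_trans (le_max_right _ _) (le_max_right _ _)
    have hLpos : (0:ℝ) < L := lt_of_lt_of_le one_pos hL1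
    have hL2Lg : 2*Lg ≤ L := le_max_left _ _
    have hL2C : 2*C ≤ L := le_trans (le_max_left _ _) (le_max_right _ _)
    refine ⟨L, hLpos, ?_⟩
    intro x x' hxx'
    set d := dist x x' with hd
    have hmax1 : θ * dist x x0 < d :=
      lt_of_le_of_lt (by nlinarith [le_max_left (dist x x0) (dist x' x0)]) hxx'
    have hmax2 : θ * dist x' x0 < d :=
      lt_of_le_of_lt (by nlinarith [le_max_right (dist x x0) (dist x' x0)]) hxx'
    have hx1 : dist x x1 ≤ dist x x0 + c := dist_triangle _ _ _
    have hx'1 : dist x' x1 ≤ dist x' x0 + c := dist_triangle _ _ _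
    have hchain : d ≤ dist (g (f x)) x + dist (g (f x)) (g (f x')) + dist (g (f x')) x' := by
      calc d ≤ dist x (g (f x)) + dist (g (f x)) x' := dist_triangle _ _ _
      _ ≤ dist x (g (f x)) + (dist (g (f x)) (g (f x')) + dist (g (f x')) x') := by
          linarith [dist_triangle (g (f x)) (g (f x')) x']
      _ = dist (g (f x)) x + dist (g (f x)) (g (f x')) + dist (g (f x')) x' := by
          rw [dist_comm x (g (f x))]; ring
    have h2 : dist (g (f x)) (g (f x')) ≤ Lg * dist (f x) (f x') + Lg := hgL _ _
    have hk1 := key x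
    have hk2 := key x'
    have hdn : (0:ℝ) ≤ dist (f x) (f x') := dist_nonneg
    -- derive d ≤ 2*C + 2*Lg*∂
    have ht1 : θ * dist x x1 ≤ θ * dist x x0 + θ * c := by
      have := mul_le_mul_of_nonneg_left hx1 hθ.le
      linarith [mul_add θ (dist x x0) c ▸ this]
    have ht2 : θ * dist x' x1 ≤ θ * dist x' x0 + θ * c := by
      have := mul_le_mul_of_nonneg_left hx'1 hθ.le
      linarith [mul_add θ (dist x' x0) c ▸ this]
    have hmain : d ≤ 2*C + 2*Lg * dist (f x) (f x') := by
      have e1 : θ * dist x x1 < d + θ * c := by linarith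
      have e2 : θ * dist x' x1 < d + θ * c := by linarith
      rw [hC]
      linarith
    rw [ge_iff_le, sub_le_iff_le_add, one_div, inv_mul_le_iff₀ hLpos]
    nlinarith [mul_le_mul_of_nonneg_right hL2Lg hdn]
end

section
/- There exist 1-Lipschitz maps f, g : ℝ → ℝ such that g∘f ∼_∞ Id_ℝ and f∘g ∼_∞ Id_ℝ (so f and g are asymptotic coarse Lipschitz equivalences of ℝ with itself), yet for every t > 0 the infimum of |g(x) − g(x')| over all x, x' ∈ ℝ with |x − x'| = t equals 0; in particular g is not a coarse Lipschitz embedding and is not almost uncollapsed. -/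

noncomputable def wfun (n : ℕ) (x : ℝ) : ℝ := min (max (x - 4 ^ n) 0) n
noncomputable def Dfun (x : ℝ) : ℝ := ∑' n, wfun n x
noncomputable def gfun (x : ℝ) : ℝ := x - Dfun x

lemma nat_le_four_pow (n : ℕ) : (n : ℝ) ≤ 4 ^ n := by
  have h := Nat.lt_two_pow_self (n := n)
  have h2 : (n : ℝ) < 2 ^ n := by exact_mod_cast h
  have : (2 : ℝ) ^ n ≤ 4 ^ n := pow_le_pow_left₀ (by norm_num) (by norm_num) n
  linarith

lemma w_nonneg (n : ℕ) (x : ℝ) : 0 ≤ wfun n x :=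
  le_min (le_max_right _ _) n.cast_nonneg

lemma w_zero {n : ℕ} {x : ℝ} (h : x ≤ 4 ^ n) : wfun n x = 0 := by
  unfold wfun
  rw [max_eq_right (by linarith), min_eq_left n.cast_nonneg]

lemma w_mono (n : ℕ) {x y : ℝ} (h : x ≤ y) : wfun n x ≤ wfun n y := by
  unfold wfun
  exact min_le_min (max_le_max (by linarith) le_rfl) le_rfl

lemma w_support (x : ℝ) : ∀ n ∉ Finset.range ⌈x⌉₊, wfun n x = 0 := by
  intro n hn
  simp only [Finset.mem_range, not_lt] at hn
  apply w_zero
  calc x ≤ (⌈x⌉₊ : ℝ) := Nat.le_ceil x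
    _ ≤ (n : ℝ) := by exact_mod_cast hn
    _ ≤ 4 ^ n := nat_le_four_pow n

lemma summable_w (x : ℝ) : Summable (fun n => wfun n x) :=
  summable_of_ne_finset_zero (w_support x)

lemma D_nonneg (x : ℝ) : 0 ≤ Dfun x := tsum_nonneg (fun n => w_nonneg n x)

lemma D_mono {x y : ℝ} (h : x ≤ y) : Dfun x ≤ Dfun y :=
  Summable.tsum_le_tsum (fun n => w_mono n h) (summable_w x) (summable_w y)

lemma key_step (n : ℕ) {x y : ℝ} (h : x ≤ y) :
    wfun n y + min (max ((4:ℝ) ^ n) x) y ≤ wfun n x + min (max ((4:ℝ) ^ (n+1)) x) y := by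
  have hb : (4:ℝ) ^ n + n ≤ 4 ^ (n + 1) := by
    have h1 := nat_le_four_pow n
    have h2 : (0:ℝ) < 4 ^ n := by positivity
    rw [pow_succ]; nlinarith
  have hn : (0:ℝ) ≤ n := n.cast_nonneg
  have h2 : (0:ℝ) < 4 ^ n := by positivity
  unfold wfun
  simp only [min_def, max_def]
  split_ifs <;> linarith

lemma D_lip {x y : ℝ} (h : x ≤ y) : Dfun y ≤ Dfun x + (y - x) := by
  apply Summable.tsum_le_of_sum_le (summable_w y)
  intro s
  obtain ⟨N, hN⟩ := s.exists_nat_subset_range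
  set c : ℕ → ℝ := fun n => min (max ((4:ℝ) ^ n) x) y with hc
  have h1 : ∑ n ∈ s, wfun n y ≤ ∑ n ∈ Finset.range N, wfun n y :=
    Finset.sum_le_sum_of_subset_of_nonneg hN (fun n _ _ => w_nonneg n y)
  have h2 : ∑ n ∈ Finset.range N, wfun n y ≤
      ∑ n ∈ Finset.range N, (wfun n x + (c (n+1) - c n)) := by
    apply Finset.sum_le_sum
    intro n _
    have := key_step n h
    simp only [hc]
    linarith
  rw [Finset.sum_add_distrib, Finset.sum_range_sub] at h2
  have h3 : ∑ n ∈ Finset.range N, wfun n x ≤ Dfun x :=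
    Summable.sum_le_tsum _ (fun n _ => w_nonneg n x) (summable_w x)
  have h4 : c N ≤ y := min_le_right _ _
  have h5 : x ≤ c 0 := le_min (le_max_right _ _) h
  linarith

lemma g_diff {x y : ℝ} (h : x ≤ y) : |gfun y - gfun x| ≤ y - x := by
  have h1 := D_mono h
  have h2 := D_lip h
  unfold gfun
  rw [abs_le]
  constructor <;> linarith

lemma g_lip : LipschitzWith 1 gfun := by
  apply LipschitzWith.of_dist_le_mul
  intro x y
  rw [Real.dist_eq, Real.dist_eq, NNReal.coe_one, one_mul]
  rcases le_total x y with h | h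
  · rw [abs_sub_comm, abs_sub_comm x y]
    calc |gfun y - gfun x| ≤ y - x := g_diff h
      _ ≤ |y - x| := le_abs_self _
  · calc |gfun x - gfun y| ≤ x - y := g_diff h
      _ ≤ |x - y| := le_abs_self _

lemma D_of_le_one {x : ℝ} (h : x ≤ 1) : Dfun x = 0 := by
  unfold Dfun
  have : ∀ n : ℕ, wfun n x = 0 := fun n => w_zero (h.trans (one_le_pow₀ (by norm_num : (1:ℝ) ≤ 4)))
  simp [this]

lemma sqrt_four_pow (n : ℕ) : Real.sqrt (4 ^ n) = 2 ^ n := by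
  have h : ((2:ℝ) ^ n) ^ 2 = 4 ^ n := by
    rw [← pow_mul, mul_comm, pow_mul]; norm_num
  rw [← h, Real.sqrt_sq (by positivity)]

lemma D_sqrt {x : ℝ} (hx : 0 ≤ x) : Dfun x ≤ 2 * Real.sqrt x := by
  have hsum : Summable (fun n : ℕ => (n : ℝ) * (1/2 : ℝ) ^ n) := by
    simpa using summable_pow_mul_geometric_of_norm_lt_one 1 (by rw [Real.norm_eq_abs, abs_of_pos] <;> norm_num : ‖(1/2:ℝ)‖ < 1)
  have hsum2 : Summable (fun n : ℕ => (n : ℝ) * (1/2 : ℝ) ^ n * Real.sqrt x) := hsum.mul_right _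
  have hterm : ∀ n : ℕ, wfun n x ≤ (n : ℝ) * (1/2 : ℝ) ^ n * Real.sqrt x := by
    intro n
    rcases le_or_gt x (4 ^ n) with h | h
    · rw [w_zero h]; positivity
    · have h1 : wfun n x ≤ n := min_le_right _ _
      have h2 : (2:ℝ) ^ n ≤ Real.sqrt x := by
        rw [← sqrt_four_pow n]
        exact Real.sqrt_le_sqrt h.le
      have h3 : ((1:ℝ)/2) ^ n * (2:ℝ) ^ n = 1 := by
        rw [← mul_pow]; norm_num
      have h4 : (0:ℝ) ≤ (1/2:ℝ)^n := by positivity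
      calc wfun n x ≤ n := h1
        _ = (n : ℝ) * ((1/2:ℝ)^n * 2^n) := by rw [h3, mul_one]
        _ ≤ (n : ℝ) * ((1/2:ℝ)^n * Real.sqrt x) := by
            have := mul_le_mul_of_nonneg_left h2 h4
            have hn : (0:ℝ) ≤ n := n.cast_nonneg
            nlinarith
        _ = (n : ℝ) * (1/2:ℝ)^n * Real.sqrt x := by ring
  have := Summable.tsum_le_tsum hterm (summable_w x) hsum2
  unfold Dfun
  apply this.trans
  rw [tsum_mul_right, tsum_coe_mul_geometric_of_norm_lt_one (show ‖(1/2:ℝ)‖ < 1 by rw [Real.norm_eq_abs, abs_of_pos] <;> norm_num)]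
  have : ((1:ℝ)/2) / (1 - 1/2) ^ 2 = 2 := by norm_num
  rw [this]

lemma g_plateau (n : ℕ) {t : ℝ} (h0 : 0 ≤ t) (h1 : t ≤ n) : gfun (4 ^ n + t) = gfun (4 ^ n) := by
  have hfour : ∀ m : ℕ, n + 1 ≤ m → (4:ℝ) ^ n + t ≤ 4 ^ m := by
    intro m hm
    have h2 : (n:ℝ) ≤ 4 ^ n := nat_le_four_pow n
    have h3 : (4:ℝ) ^ (n+1) ≤ 4 ^ m := pow_le_pow_right₀ (by norm_num) hm
    have h4 : (0:ℝ) < 4 ^ n := by positivity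
    rw [pow_succ] at h3
    nlinarith
  have hDx : Dfun (4 ^ n) = ∑ m ∈ Finset.range (n + 1), wfun m ((4:ℝ) ^ n) := by
    apply tsum_eq_sum
    intro m hm
    simp only [Finset.mem_range, not_lt] at hm
    exact w_zero (by have := hfour m hm; linarith [pow_le_pow_right₀ (show (1:ℝ) ≤ 4 by norm_num) hm]
      )
  have hDy : Dfun (4 ^ n + t) = ∑ m ∈ Finset.range (n + 1), wfun m ((4:ℝ) ^ n + t) := by
    apply tsum_eq_sum
    intro m hm
    simp only [Finset.mem_range, not_lt] at hm
    exact w_zero (hfour m hm)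
  have hwn0 : wfun n ((4:ℝ) ^ n) = 0 := w_zero le_rfl
  have hwnt : wfun n ((4:ℝ) ^ n + t) = t := by
    unfold wfun
    rw [add_sub_cancel_left, max_eq_left h0, min_eq_left h1]
  have hlow : Dfun ((4:ℝ) ^ n) + t ≤ Dfun ((4:ℝ) ^ n + t) := by
    rw [hDx, hDy, Finset.sum_range_succ, Finset.sum_range_succ, hwn0, hwnt]
    have : ∑ m ∈ Finset.range n, wfun m ((4:ℝ)^n) ≤ ∑ m ∈ Finset.range n, wfun m ((4:ℝ)^n + t) :=
      Finset.sum_le_sum (fun m _ => w_mono m (by linarith))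
    linarith
  have hhigh : Dfun ((4:ℝ) ^ n + t) ≤ Dfun ((4:ℝ) ^ n) + t := by
    have := D_lip (show (4:ℝ)^n ≤ 4^n + t by linarith)
    linarith
  unfold gfun
  have : Dfun ((4:ℝ)^n + t) = Dfun ((4:ℝ)^n) + t := le_antisymm hhigh hlow
  rw [this]; ring

lemma g_asympclose : AsympClose gfun id := by
  right
  refine ⟨0, fun ε hε => ⟨max 1 (4 / ε ^ 2), lt_of_lt_of_le one_pos (le_max_left _ _), ?_⟩⟩
  intro x hx
  simp only [id_eq]
  rw [Real.dist_eq, sub_zero] at hx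
  rw [Real.dist_eq, Real.dist_eq, sub_zero]
  unfold gfun
  rcases le_or_gt x 0 with h | h
  · rw [D_of_le_one (by linarith)]
    simp
    positivity
  · rw [abs_of_pos h] at hx ⊢
    have h1 : 4 / ε ^ 2 ≤ x := le_trans (le_max_right _ _) hx
    have h2 : Dfun x ≤ 2 * Real.sqrt x := D_sqrt h.le
    have hs : Real.sqrt x * Real.sqrt x = x := Real.mul_self_sqrt h.le
    have hs0 : 0 ≤ Real.sqrt x := Real.sqrt_nonneg x
    have h3 : 2 / ε ≤ Real.sqrt x := by
      rw [show (2:ℝ)/ε = Real.sqrt ((2/ε)^2) from (Real.sqrt_sq (by positivity)).symm]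
      apply Real.sqrt_le_sqrt
      rw [div_pow]
      norm_num
      linarith
    have h4 : 2 ≤ ε * Real.sqrt x := by
      rw [div_le_iff₀ hε] at h3
      linarith
    have h5 : 2 * Real.sqrt x ≤ ε * x := by nlinarith
    have habs : |x - Dfun x - x| = Dfun x := by
      rw [show x - Dfun x - x = -(Dfun x) by ring, abs_neg, abs_of_nonneg (D_nonneg x)]
    rw [habs]
    linarith


/-- There are 1-Lipschitz maps `f g : ℝ → ℝ` with `g ∘ f ∼_∞ Id` and
`f ∘ g ∼_∞ Id` (so they are asymptotic coarse Lipschitz equivalences of `ℝ`), yet for all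
`t > 0` the infimum of `|g x − g x'|` over `|x − x'| = t` is `0`; in particular `g` is not
a coarse Lipschitz embedding and not almost uncollapsed. -/
theorem exists_asympCLEquiv_real_collapsing :
    ∃ f g : ℝ → ℝ, LipschitzWith 1 f ∧ LipschitzWith 1 g ∧
      AsympClose (g ∘ f) id ∧ AsympClose (f ∘ g) id ∧
      (∀ t > (0 : ℝ), sInf {d : ℝ | ∃ x x' : ℝ, dist x x' = t ∧ d = dist (g x) (g x')} = 0) ∧
      ¬ (CoarseLipschitz g ∧
          ∃ L > (0 : ℝ), ∀ x x' : ℝ, dist (g x) (g x') ≥ dist x x' / L - L) ∧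
      ¬ (∃ t > (0 : ℝ), ∃ c > (0 : ℝ), ∀ x x' : ℝ, dist x x' = t → c ≤ dist (g x) (g x')) := by
  refine ⟨id, gfun, LipschitzWith.id, g_lip, ?_, ?_, ?_, ?_, ?_⟩
  · rw [Function.comp_id]; exact g_asympclose
  · rw [Function.id_comp]; exact g_asympclose
  · intro t ht
    obtain ⟨n, hn⟩ := exists_nat_ge t
    have hmem : (0:ℝ) ∈ {d : ℝ | ∃ x x' : ℝ, dist x x' = t ∧ d = dist (gfun x) (gfun x')} := by
      refine ⟨(4:ℝ)^n + t, (4:ℝ)^n, ?_, ?_⟩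
      · rw [Real.dist_eq, add_sub_cancel_left, abs_of_pos ht]
      · rw [g_plateau n ht.le hn, dist_self]
    have hlb : ∀ d ∈ {d : ℝ | ∃ x x' : ℝ, dist x x' = t ∧ d = dist (gfun x) (gfun x')}, (0:ℝ) ≤ d := by
      rintro d ⟨x, x', -, rfl⟩; exact dist_nonneg
    exact le_antisymm (csInf_le ⟨0, hlb⟩ hmem) (le_csInf ⟨0, hmem⟩ hlb)
  · rintro ⟨-, L, hL, h⟩
    obtain ⟨n, hn⟩ := exists_nat_gt (L * L)
    have heq : gfun ((4:ℝ)^n + n) = gfun ((4:ℝ)^n) := g_plateau n n.cast_nonneg le_rfl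
    have := h ((4:ℝ)^n + n) ((4:ℝ)^n)
    rw [heq, dist_self, Real.dist_eq, add_sub_cancel_left, abs_of_nonneg n.cast_nonneg] at this
    rw [ge_iff_le, sub_nonpos, div_le_iff₀ hL] at this
    nlinarith
  · rintro ⟨t, ht, c, hc, h⟩
    obtain ⟨n, hn⟩ := exists_nat_ge t
    have heq : gfun ((4:ℝ)^n + t) = gfun ((4:ℝ)^n) := g_plateau n ht.le hn
    have := h ((4:ℝ)^n + t) ((4:ℝ)^n)
      (by rw [Real.dist_eq, add_sub_cancel_left, abs_of_pos ht])
    rw [heq, dist_self] at this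
    linarith
end

section
/- Let X = {2^n : n ∈ ℕ} ⊆ ℝ and Y = {(2^n, j) : n ∈ ℕ, j ∈ {0,1,…,n}} ⊆ ℝ², each with the metric inherited from the Euclidean metric. Then the maps f : X → Y and g : Y → X defined by f(2^n) = (2^n, 0) and g(2^n, j) = 2^n are coarse Lipschitz, g∘f ∼_∞ Id_X and f∘g ∼_∞ Id_Y; hence X and Y are asymptotically coarse Lipschitz equivalent. -/
/-- The subset `X = {2^n : n ∈ ℕ}` of `ℝ`. -/
def PowersOfTwo : Set ℝ := {x : ℝ | ∃ n : ℕ, x = 2 ^ n}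

/-- The subset `Y = {(2^n, j) : n ∈ ℕ, 0 ≤ j ≤ n}` of the Euclidean plane. -/
def PowersOfTwoColumns : Set (EuclideanSpace ℝ (Fin 2)) :=
  {p | ∃ n j : ℕ, j ≤ n ∧ p = ![(2 : ℝ) ^ n, (j : ℝ)]}



lemma dist_pair (p q : EuclideanSpace ℝ (Fin 2)) :
    dist p q = Real.sqrt ((p 0 - q 0)^2 + (p 1 - q 1)^2) := by
  rw [EuclideanSpace.dist_eq, Fin.sum_univ_two]
  simp [Real.dist_eq, sq_abs]

lemma coord_dist_le (p q : EuclideanSpace ℝ (Fin 2)) (i : Fin 2) :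
    dist (p i) (q i) ≤ dist p q := by
  rw [EuclideanSpace.dist_eq]
  rw [show dist (p i) (q i) = Real.sqrt (dist (p i) (q i) ^ 2) from
    (Real.sqrt_sq dist_nonneg).symm]
  apply Real.sqrt_le_sqrt
  exact Finset.single_le_sum (f := fun j => dist (p j) (q j) ^ 2)
    (fun j _ => sq_nonneg _) (Finset.mem_univ i)


/-- The maps `f : X → Y`, `f(2^n) = (2^n, 0)`, and `g : Y → X`,
`g(2^n, j) = 2^n`, are coarse Lipschitz with `g ∘ f ∼_∞ Id_X` and `f ∘ g ∼_∞ Id_Y`; hence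
`X` and `Y` are asymptotically coarse Lipschitz equivalent. -/
theorem powersOfTwo_asympCLEquiv
    (f : PowersOfTwo → PowersOfTwoColumns) (g : PowersOfTwoColumns → PowersOfTwo)
    (hf : ∀ p : PowersOfTwo,
      (f p : EuclideanSpace ℝ (Fin 2)) = ![(p : ℝ), (0 : ℝ)])
    (hg : ∀ q : PowersOfTwoColumns,
      (g q : ℝ) = (q : EuclideanSpace ℝ (Fin 2)) 0) :
    CoarseLipschitz f ∧ CoarseLipschitz g ∧
      AsympClose (g ∘ f) id ∧ AsympClose (f ∘ g) id ∧
      AsympCLEquivalent PowersOfTwo PowersOfTwoColumns := by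
  -- dist (f p) (f p') = dist p p'
  have hfd : ∀ p p' : PowersOfTwo, dist (f p) (f p') = dist p p' := by
    intro p p'
    rw [Subtype.dist_eq, Subtype.dist_eq, dist_pair, hf, hf]
    simp [Real.dist_eq, Real.sqrt_sq_eq_abs]
  have hCLf : CoarseLipschitz f := by
    refine ⟨1, one_pos, fun p p' => ?_⟩
    rw [hfd]; linarith [dist_nonneg (x := p) (y := p')]
  have hCLg : CoarseLipschitz g := by
    refine ⟨1, one_pos, fun q q' => ?_⟩
    have : dist (g q) (g q') ≤ dist q q' := by
      rw [Subtype.dist_eq, Subtype.dist_eq, hg, hg]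
      exact coord_dist_le _ _ 0
    linarith [dist_nonneg (x := q) (y := q')]
  -- g ∘ f = id
  have hgfid : ∀ p : PowersOfTwo, g (f p) = p := by
    intro p
    apply Subtype.ext
    rw [hg, hf]
    simp
  have hx0X : (1 : ℝ) ∈ PowersOfTwo := ⟨0, by norm_num⟩
  have hgf : AsympClose (g ∘ f) (id : PowersOfTwo → PowersOfTwo) := by
    refine Or.inr ⟨⟨1, hx0X⟩, fun ε hε => ⟨1, one_pos, fun x _ => ?_⟩⟩
    simp only [Function.comp_apply, hgfid, id]
    simpa using mul_nonneg hε.le dist_nonneg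
  -- basepoint of Y
  have hx0Y : (!₂[1, 0] : EuclideanSpace ℝ (Fin 2)) ∈ PowersOfTwoColumns := by
    refine ⟨0, 0, le_refl 0, ?_⟩
    ext i; fin_cases i <;> simp
  set y0 : PowersOfTwoColumns := ⟨!₂[1, 0], hx0Y⟩ with hy0
  have hfg : AsympClose (f ∘ g) (id : PowersOfTwoColumns → PowersOfTwoColumns) := by
    refine Or.inr ⟨y0, fun ε hε => ?_⟩
    -- choose N with n * (1/2)^n < ε/2 for n ≥ N
    have htend : Filter.Tendsto (fun n : ℕ => (n : ℝ) * (1/2 : ℝ) ^ n)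
        Filter.atTop (nhds 0) :=
      tendsto_self_mul_const_pow_of_lt_one (by norm_num) (by norm_num)
    have hev : ∀ᶠ n : ℕ in Filter.atTop, (n : ℝ) * (1/2 : ℝ) ^ n < ε / 2 :=
      htend.eventually (eventually_lt_nhds (half_pos hε))
    obtain ⟨N, hN⟩ := Filter.eventually_atTop.mp hev
    refine ⟨(2 : ℝ) ^ (max N 1 + 1), by positivity, fun q hq => ?_⟩
    obtain ⟨n, j, hjn, hqe⟩ := q.2
    have hb : (j : ℝ) ≤ (n : ℝ) := by exact_mod_cast hjn
    have hbnn : (0 : ℝ) ≤ (j : ℝ) := Nat.cast_nonneg j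
    have hn2 : (n : ℝ) ≤ 2 ^ n := by exact_mod_cast (Nat.lt_two_pow_self (n := n)).le
    have h2pos : (0 : ℝ) < 2 ^ n := by positivity
    have h1 : (1 : ℝ) ≤ 2 ^ n := one_le_pow₀ (by norm_num)
    -- dist q y0
    have hdq : dist q y0 = Real.sqrt (((2:ℝ)^n - 1)^2 + (j:ℝ)^2) := by
      rw [Subtype.dist_eq, dist_pair, hqe]
      norm_num [hy0]
    -- upper bound on dist q y0
    have hub : dist q y0 ≤ (2:ℝ) ^ (n + 1) := by
      rw [hdq]
      have h' : Real.sqrt (((2:ℝ)^n - 1)^2 + (j:ℝ)^2) ≤ ((2:ℝ)^n - 1) + (j:ℝ) := by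
        rw [show ((2:ℝ)^n - 1) + (j:ℝ)
            = Real.sqrt ((((2:ℝ)^n - 1) + (j:ℝ))^2) from
          (Real.sqrt_sq (by linarith)).symm]
        apply Real.sqrt_le_sqrt
        nlinarith
      have : ((2:ℝ)^n - 1) + (j:ℝ) ≤ (2:ℝ)^(n+1) := by
        rw [pow_succ]; nlinarith
      linarith
    -- hence n ≥ max N 1
    have hnN : max N 1 ≤ n := by
      have h2 : (2:ℝ) ^ (max N 1 + 1) ≤ (2:ℝ) ^ (n + 1) := le_trans hq hub
      have h2' : (2:ℕ) ^ (max N 1 + 1) ≤ 2 ^ (n + 1) := by exact_mod_cast h2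
      have := (Nat.pow_le_pow_iff_right (by norm_num : 1 < 2)).mp h2'
      omega
    have hn1 : 1 ≤ n := le_trans (le_max_right N 1) hnN
    have hnN' : N ≤ n := le_trans (le_max_left N 1) hnN
    -- smallness: n < ε/2 * 2^n
    have hsmall : (n : ℝ) < ε / 2 * 2 ^ n := by
      have h' := hN n hnN'
      rw [div_pow, one_pow, mul_one_div] at h'
      exact (div_lt_iff₀ h2pos).mp h'
    -- lower bound on dist q y0
    have hlb1 : (2:ℝ)^n - 1 ≤ dist q y0 := by
      rw [hdq]
      nth_rewrite 1 [show (2:ℝ)^n - 1 = Real.sqrt (((2:ℝ)^n - 1)^2) from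
        (Real.sqrt_sq (by linarith)).symm]
      apply Real.sqrt_le_sqrt
      nlinarith
    have h2n2 : (2:ℝ) ≤ 2 ^ n := by
      calc (2:ℝ) = 2 ^ 1 := (pow_one 2).symm
        _ ≤ 2 ^ n := pow_le_pow_right₀ (by norm_num) hn1
    have hlb : (2:ℝ)^n / 2 ≤ dist q y0 := by linarith
    -- dist ((f ∘ g) q) q = j
    have hval : dist ((f ∘ g) q) (id q) = (j : ℝ) := by
      have hgq : (g q : ℝ) = (2:ℝ)^n := by rw [hg, hqe]; simp
      simp only [Function.comp_apply, id]
      rw [Subtype.dist_eq, dist_pair, hf, hgq, hqe]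
      simp [Real.sqrt_sq hbnn]
    rw [hval]
    -- conclude
    have : ε / 2 * 2 ^ n = ε * (2 ^ n / 2) := by ring
    calc (j : ℝ) ≤ (n : ℝ) := hb
      _ ≤ ε / 2 * 2 ^ n := hsmall.le
      _ = ε * ((2:ℝ)^n / 2) := by ring
      _ ≤ ε * dist q y0 := mul_le_mul_of_nonneg_left hlb hε.le
  exact ⟨hCLf, hCLg, hgf, hfg, ⟨f, g, hCLf, hCLg, hgf, hfg⟩⟩
end

section
/- Let X = {(x + log(y+1), y) : x, y ∈ [0,∞)} ⊆ ℝ² and Y = X ∪ ({0} × [0,∞)) ⊆ ℝ², with the Euclidean metric. Let f : X → Y be the inclusion map and g : Y → X be given by g(x,y) = (x + log(y+1), y). Then f and g are coarse Lipschitz, g∘f ∼_∞ Id_X, f∘g ∼_∞ Id_Y, Exp_∞(g∘f) > 0 and Exp_∞(f∘g) > 0; in particular both f and g are coarse Lipschitz embeddings and X and Y are asymptotically coarse Lipschitz equivalent. -/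
/-- For `s > 0`, `Exp_s(f) = inf { ∂(f x, f z)/d(x,z) : d(x,z) ≥ s }`, with `inf ∅ = ∞`
(valued in `ℝ≥0∞`). -/
noncomputable def ExpAt {X Y : Type*} [PseudoMetricSpace X] [PseudoMetricSpace Y]
    (f : X → Y) (s : ℝ) : ENNReal :=
  ⨅ p : {p : X × X // s ≤ dist p.1 p.2},
    ENNReal.ofReal (dist (f p.1.1) (f p.1.2) / dist p.1.1 p.1.2)

/-- `Exp_∞(f) = sup_{s > 0} Exp_s(f)`. -/
noncomputable def ExpInfty {X Y : Type*} [PseudoMetricSpace X] [PseudoMetricSpace Y]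
    (f : X → Y) : ENNReal :=
  ⨆ s : ℝ, ⨆ _ : 0 < s, ExpAt f s

/-- The subset `X = {(x + log(y+1), y) : x, y ∈ [0,∞)}` of the Euclidean plane. -/
def LogShiftedQuadrant : Set (EuclideanSpace ℝ (Fin 2)) :=
  {p | ∃ x y : ℝ, 0 ≤ x ∧ 0 ≤ y ∧ p = ![x + Real.log (y + 1), y]}

/-- The subset `Y = X ∪ ({0} × [0,∞))` of the Euclidean plane. -/
def LogShiftedQuadrantWithAxis : Set (EuclideanSpace ℝ (Fin 2)) :=
  LogShiftedQuadrant ∪ {p | ∃ y : ℝ, 0 ≤ y ∧ p = ![(0 : ℝ), y]}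

open Real in
private lemma logLip {b b' : ℝ} (hb' : 0 ≤ b') (h : b' ≤ b) :
    Real.log (b + 1) - Real.log (b' + 1) ≤ b - b' := by
  have hb'1 : (0:ℝ) < b' + 1 := by linarith
  have hb1 : (0:ℝ) < b + 1 := by linarith
  have := Real.log_le_sub_one_of_pos (x := (b+1)/(b'+1)) (by positivity)
  rw [Real.log_div (ne_of_gt hb1) (ne_of_gt hb'1)] at this
  have h2 : (b+1)/(b'+1) - 1 ≤ b - b' := by
    rw [div_sub_one (ne_of_gt hb'1), div_le_iff₀ hb'1]
    nlinarith
  linarith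

private lemma logAbsLip {b b' : ℝ} (hb : 0 ≤ b) (hb' : 0 ≤ b') :
    |Real.log (b + 1) - Real.log (b' + 1)| ≤ |b - b'| := by
  rcases le_total b' b with h | h
  · have m : Real.log (b' + 1) ≤ Real.log (b + 1) :=
      Real.log_le_log (by linarith) (by linarith)
    rw [abs_of_nonneg (by linarith), abs_of_nonneg (by linarith)]
    exact logLip hb' h
  · have m : Real.log (b + 1) ≤ Real.log (b' + 1) :=
      Real.log_le_log (by linarith) (by linarith)
    rw [abs_sub_comm, abs_sub_comm b b']
    rw [abs_of_nonneg (by linarith), abs_of_nonneg (by linarith)]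
    exact logLip hb h

private lemma logSqLip {b b' : ℝ} (hb : 0 ≤ b) (hb' : 0 ≤ b') :
    (Real.log (b + 1) - Real.log (b' + 1))^2 ≤ (b - b')^2 := by
  have h := logAbsLip hb hb'
  have := pow_le_pow_left₀ (abs_nonneg _) h 2
  rwa [sq_abs, sq_abs] at this

private lemma distTwo (u v : EuclideanSpace ℝ (Fin 2)) :
    dist u v = Real.sqrt ((u 0 - v 0)^2 + (u 1 - v 1)^2) := by
  rw [EuclideanSpace.dist_eq]
  simp [Fin.sum_univ_two, Real.dist_eq, sq_abs]

private lemma logLeTwoSqrt {u : ℝ} (hu : 0 ≤ u) : Real.log (u + 1) ≤ 2 * Real.sqrt u := by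
  have h1 : Real.log (Real.sqrt (u+1)) ≤ Real.sqrt (u+1) - 1 :=
    Real.log_le_sub_one_of_pos (Real.sqrt_pos.2 (by linarith))
  rw [Real.log_sqrt (by linarith)] at h1
  have h2 : Real.sqrt (u+1) ≤ Real.sqrt u + 1 := by
    rw [show Real.sqrt u + 1 = Real.sqrt ((Real.sqrt u + 1)^2) by
      rw [Real.sqrt_sq (by positivity)]]
    apply Real.sqrt_le_sqrt
    nlinarith [Real.sq_sqrt hu, Real.sqrt_nonneg u]
  linarith

private lemma sqrtUpper {a b L : ℝ} (hL : L^2 ≤ b^2) :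
    Real.sqrt ((a + L)^2 + b^2) ≤ 2 * Real.sqrt (a^2 + b^2) := by
  rw [show 2 * Real.sqrt (a^2+b^2) = Real.sqrt (4*(a^2+b^2)) by
    rw [show (4:ℝ)*(a^2+b^2) = 2^2*(a^2+b^2) by ring, Real.sqrt_mul (by positivity),
      Real.sqrt_sq (by norm_num : (0:ℝ) ≤ 2)]]
  apply Real.sqrt_le_sqrt
  nlinarith [sq_nonneg (a - L)]

private lemma sqrtLower {a b L : ℝ} (hL : L^2 ≤ b^2) :
    Real.sqrt (a^2 + b^2) ≤ 3 * Real.sqrt ((a + L)^2 + b^2) := by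
  rw [show 3 * Real.sqrt ((a+L)^2+b^2) = Real.sqrt (9*((a+L)^2+b^2)) by
    rw [show (9:ℝ)*((a+L)^2+b^2) = 3^2*((a+L)^2+b^2) by ring, Real.sqrt_mul (by positivity),
      Real.sqrt_sq (by norm_num : (0:ℝ) ≤ 3)]]
  apply Real.sqrt_le_sqrt
  nlinarith [sq_nonneg (8*a + 9*L), sq_nonneg L]

private lemma distGEq {u v u' v' : EuclideanSpace ℝ (Fin 2)}
    (hu' : u' = ![u 0 + Real.log (u 1 + 1), u 1])
    (hv' : v' = ![v 0 + Real.log (v 1 + 1), v 1]) :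
    dist u' v' = Real.sqrt
      (((u 0 - v 0) + (Real.log (u 1 + 1) - Real.log (v 1 + 1)))^2 + (u 1 - v 1)^2) := by
  have c0 : u' 0 = u 0 + Real.log (u 1 + 1) := by rw [hu']; rfl
  have c1 : u' 1 = u 1 := by rw [hu']; rfl
  have d0 : v' 0 = v 0 + Real.log (v 1 + 1) := by rw [hv']; rfl
  have d1 : v' 1 = v 1 := by rw [hv']; rfl
  rw [distTwo, c0, c1, d0, d1]
  congr 1
  ring

private lemma distGUpper {u v u' v' : EuclideanSpace ℝ (Fin 2)}
    (hu1 : 0 ≤ u 1) (hv1 : 0 ≤ v 1)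
    (hu' : u' = ![u 0 + Real.log (u 1 + 1), u 1])
    (hv' : v' = ![v 0 + Real.log (v 1 + 1), v 1]) :
    dist u' v' ≤ 2 * dist u v := by
  rw [distGEq hu' hv', distTwo]
  exact sqrtUpper (logSqLip hu1 hv1)

private lemma distGLower {u v u' v' : EuclideanSpace ℝ (Fin 2)}
    (hu1 : 0 ≤ u 1) (hv1 : 0 ≤ v 1)
    (hu' : u' = ![u 0 + Real.log (u 1 + 1), u 1])
    (hv' : v' = ![v 0 + Real.log (v 1 + 1), v 1]) :
    dist u v ≤ 3 * dist u' v' := by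
  rw [distGEq hu' hv', distTwo]
  exact sqrtLower (logSqLip hu1 hv1)

private lemma selfDist {w w' : EuclideanSpace ℝ (Fin 2)} (hw1 : 0 ≤ w 1)
    (hw' : w' = ![w 0 + Real.log (w 1 + 1), w 1]) :
    dist w' w = Real.log (w 1 + 1) := by
  have c0 : w' 0 = w 0 + Real.log (w 1 + 1) := by rw [hw']; rfl
  have c1 : w' 1 = w 1 := by rw [hw']; rfl
  rw [distTwo, c0, c1]
  rw [show w 0 + Real.log (w 1 + 1) - w 0 = Real.log (w 1 + 1) by ring, sub_self]
  rw [show (0:ℝ)^2 = 0 by ring, add_zero]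
  exact Real.sqrt_sq (Real.log_nonneg (by linarith))

private lemma distGeSnd (u v : EuclideanSpace ℝ (Fin 2)) : |u 1 - v 1| ≤ dist u v := by
  rw [distTwo, show |u 1 - v 1| = Real.sqrt ((u 1 - v 1)^2) by
    rw [Real.sqrt_sq_eq_abs]]
  apply Real.sqrt_le_sqrt
  nlinarith [sq_nonneg (u 0 - v 0)]

private lemma asympAux {ε : ℝ} (hε : 0 < ε) :
    ∃ R > (0:ℝ), ∀ u d : ℝ, 0 ≤ u → u ≤ d → R ≤ d → Real.log (u + 1) ≤ ε * d := by
  refine ⟨max 1 (4/ε^2), lt_of_lt_of_le one_pos (le_max_left _ _), fun u d hu hud hR => ?_⟩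
  have hd0 : 0 ≤ d := le_trans hu hud
  have h1 : Real.log (u+1) ≤ 2 * Real.sqrt u := logLeTwoSqrt hu
  have h2 : Real.sqrt u ≤ Real.sqrt d := Real.sqrt_le_sqrt hud
  have h4 : 4/ε^2 ≤ d := le_trans (le_max_right _ _) hR
  have h5 : 2/ε ≤ Real.sqrt d := by
    rw [show 2/ε = Real.sqrt ((2/ε)^2) by rw [Real.sqrt_sq (by positivity)]]
    apply Real.sqrt_le_sqrt
    rw [div_pow]
    norm_num
    exact h4
  have h6 : 2 ≤ ε * Real.sqrt d := by
    have h := mul_le_mul_of_nonneg_left h5 hε.le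
    rw [show ε * (2/ε) = 2 by field_simp] at h
    exact h
  have h7 : ε * d = ε * Real.sqrt d * Real.sqrt d := by
    rw [mul_assoc, Real.mul_self_sqrt hd0]
  nlinarith [Real.sqrt_nonneg d, Real.sqrt_nonneg u]

private lemma memXsnd {p : EuclideanSpace ℝ (Fin 2)} (hp : p ∈ LogShiftedQuadrant) :
    0 ≤ p 1 := by
  obtain ⟨x, y, hx, hy, h⟩ := hp
  rw [h]
  exact hy

private lemma memYsnd {q : EuclideanSpace ℝ (Fin 2)}
    (hq : q ∈ LogShiftedQuadrantWithAxis) : 0 ≤ q 1 := by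
  rcases hq with h | ⟨y, hy, h⟩
  · exact memXsnd h
  · rw [h]
    exact hy

private lemma originMemX : (WithLp.toLp 2 (![0, 0] : Fin 2 → ℝ) : EuclideanSpace ℝ (Fin 2)) ∈ LogShiftedQuadrant := by
  refine ⟨0, 0, le_refl _, le_refl _, ?_⟩
  funext i
  fin_cases i <;> simp

/-- With `f : X → Y` the inclusion and `g : Y → X` given by
`g(x,y) = (x + log(y+1), y)`, the maps `f` and `g` are coarse Lipschitz,
`g ∘ f ∼_∞ Id_X`, `f ∘ g ∼_∞ Id_Y`, `Exp_∞(g ∘ f) > 0` and `Exp_∞(f ∘ g) > 0`; in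
particular `f` and `g` are coarse Lipschitz embeddings and `X`, `Y` are asymptotically
coarse Lipschitz equivalent. -/
theorem logShiftedQuadrant_asympCLEquiv
    (f : LogShiftedQuadrant → LogShiftedQuadrantWithAxis)
    (g : LogShiftedQuadrantWithAxis → LogShiftedQuadrant)
    (hf : ∀ p : LogShiftedQuadrant,
      (f p : EuclideanSpace ℝ (Fin 2)) = (p : EuclideanSpace ℝ (Fin 2)))
    (hg : ∀ q : LogShiftedQuadrantWithAxis,
      (g q : EuclideanSpace ℝ (Fin 2)) =
        ![(q : EuclideanSpace ℝ (Fin 2)) 0 +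
            Real.log ((q : EuclideanSpace ℝ (Fin 2)) 1 + 1),
          (q : EuclideanSpace ℝ (Fin 2)) 1]) :
    CoarseLipschitz f ∧ CoarseLipschitz g ∧
      AsympClose (g ∘ f) id ∧ AsympClose (f ∘ g) id ∧
      0 < ExpInfty (g ∘ f) ∧ 0 < ExpInfty (f ∘ g) ∧
      (∃ L > (0 : ℝ), ∀ p p' : LogShiftedQuadrant,
        dist (f p) (f p') ≥ dist p p' / L - L) ∧
      (∃ L > (0 : ℝ), ∀ q q' : LogShiftedQuadrantWithAxis,
        dist (g q) (g q') ≥ dist q q' / L - L) ∧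
      AsympCLEquivalent LogShiftedQuadrant LogShiftedQuadrantWithAxis := by
  have hX1 : ∀ p : LogShiftedQuadrant, 0 ≤ (p : EuclideanSpace ℝ (Fin 2)) 1 :=
    fun p => memXsnd p.2
  have hY1 : ∀ q : LogShiftedQuadrantWithAxis, 0 ≤ (q : EuclideanSpace ℝ (Fin 2)) 1 :=
    fun q => memYsnd q.2
  have fd : ∀ p p' : LogShiftedQuadrant, dist (f p) (f p') = dist p p' := by
    intro p p'
    rw [Subtype.dist_eq, Subtype.dist_eq (α := EuclideanSpace ℝ (Fin 2)) p p', hf, hf]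
  have gup : ∀ q q' : LogShiftedQuadrantWithAxis, dist (g q) (g q') ≤ 2 * dist q q' := by
    intro q q'
    simp only [Subtype.dist_eq]
    exact distGUpper (hY1 q) (hY1 q') (hg q) (hg q')
  have glow : ∀ q q' : LogShiftedQuadrantWithAxis, dist q q' ≤ 3 * dist (g q) (g q') := by
    intro q q'
    simp only [Subtype.dist_eq]
    exact distGLower (hY1 q) (hY1 q') (hg q) (hg q')
  have gfco : ∀ p : LogShiftedQuadrant, ((g (f p)) : EuclideanSpace ℝ (Fin 2)) =
      ![(p : EuclideanSpace ℝ (Fin 2)) 0 + Real.log ((p : EuclideanSpace ℝ (Fin 2)) 1 + 1),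
        (p : EuclideanSpace ℝ (Fin 2)) 1] := by
    intro p
    rw [hg, hf]
  have gfd : ∀ p : LogShiftedQuadrant,
      dist ((g ∘ f) p) p = Real.log ((p : EuclideanSpace ℝ (Fin 2)) 1 + 1) := by
    intro p
    rw [Function.comp_apply, Subtype.dist_eq]
    exact selfDist (hX1 p) (gfco p)
  have fgd : ∀ q : LogShiftedQuadrantWithAxis,
      dist ((f ∘ g) q) q = Real.log ((q : EuclideanSpace ℝ (Fin 2)) 1 + 1) := by
    intro q
    rw [Function.comp_apply, Subtype.dist_eq, hf]
    exact selfDist (hY1 q) (hg q)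
  have clf : CoarseLipschitz f := ⟨1, one_pos, fun p p' => by
    rw [fd]
    linarith⟩
  have clg : CoarseLipschitz g := ⟨2, two_pos, fun q q' => by
    have := gup q q'
    linarith⟩
  set x0 : LogShiftedQuadrant := ⟨WithLp.toLp 2 (![0, 0] : Fin 2 → ℝ), originMemX⟩ with hx0def
  set y0 : LogShiftedQuadrantWithAxis := ⟨WithLp.toLp 2 (![0, 0] : Fin 2 → ℝ), Or.inl originMemX⟩ with hy0def
  have hx0c : (x0 : EuclideanSpace ℝ (Fin 2)) 1 = 0 := rfl
  have hy0c : (y0 : EuclideanSpace ℝ (Fin 2)) 1 = 0 := rfl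
  have acgf : AsympClose (g ∘ f) id := by
    refine Or.inr ⟨x0, fun ε hε => ?_⟩
    obtain ⟨R, hR, hRa⟩ := asympAux hε
    refine ⟨R, hR, fun p hp => ?_⟩
    have hpd : (p : EuclideanSpace ℝ (Fin 2)) 1 ≤ dist p x0 := by
      rw [Subtype.dist_eq]
      have h := distGeSnd (p : EuclideanSpace ℝ (Fin 2)) (x0 : EuclideanSpace ℝ (Fin 2))
      rw [hx0c, sub_zero, abs_of_nonneg (hX1 p)] at h
      exact h
    show dist ((g ∘ f) p) p ≤ ε * dist p x0
    rw [gfd p]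
    exact hRa _ _ (hX1 p) hpd hp
  have acfg : AsympClose (f ∘ g) id := by
    refine Or.inr ⟨y0, fun ε hε => ?_⟩
    obtain ⟨R, hR, hRa⟩ := asympAux hε
    refine ⟨R, hR, fun q hq => ?_⟩
    have hqd : (q : EuclideanSpace ℝ (Fin 2)) 1 ≤ dist q y0 := by
      rw [Subtype.dist_eq]
      have h := distGeSnd (q : EuclideanSpace ℝ (Fin 2)) (y0 : EuclideanSpace ℝ (Fin 2))
      rw [hy0c, sub_zero, abs_of_nonneg (hY1 q)] at h
      exact h
    show dist ((f ∘ g) q) q ≤ ε * dist q y0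
    rw [fgd q]
    exact hRa _ _ (hY1 q) hqd hq
  have keyX : ∀ p p' : LogShiftedQuadrant,
      dist p p' ≤ 3 * dist ((g ∘ f) p) ((g ∘ f) p') := by
    intro p p'
    simp only [Function.comp_apply, Subtype.dist_eq]
    exact distGLower (hX1 p) (hX1 p') (gfco p) (gfco p')
  have keyY : ∀ q q' : LogShiftedQuadrantWithAxis,
      dist q q' ≤ 3 * dist ((f ∘ g) q) ((f ∘ g) q') := by
    intro q q'
    simp only [Function.comp_apply, Subtype.dist_eq, hf]
    exact distGLower (hY1 q) (hY1 q') (hg q) (hg q')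
  have exp1 : 0 < ExpInfty (g ∘ f) := by
    have h3 : ENNReal.ofReal (1/3) ≤ ExpAt (g ∘ f) 1 := by
      refine le_iInf ?_
      rintro ⟨⟨p, p'⟩, hpp⟩
      refine ENNReal.ofReal_le_ofReal ?_
      have hd : (0:ℝ) < dist p p' := lt_of_lt_of_le one_pos hpp
      rw [le_div_iff₀ hd]
      have := keyX p p'
      linarith
    have h4 : ExpAt (g ∘ f) 1 ≤ ExpInfty (g ∘ f) :=
      le_iSup₂ (f := fun (s : ℝ) (_ : (0:ℝ) < s) => ExpAt (g ∘ f) s) 1 one_pos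
    calc (0:ENNReal) < ENNReal.ofReal (1/3) := by
          rw [ENNReal.ofReal_pos]; norm_num
      _ ≤ _ := le_trans h3 h4
  have exp2 : 0 < ExpInfty (f ∘ g) := by
    have h3 : ENNReal.ofReal (1/3) ≤ ExpAt (f ∘ g) 1 := by
      refine le_iInf ?_
      rintro ⟨⟨q, q'⟩, hqq⟩
      refine ENNReal.ofReal_le_ofReal ?_
      have hd : (0:ℝ) < dist q q' := lt_of_lt_of_le one_pos hqq
      rw [le_div_iff₀ hd]
      have := keyY q q'
      linarith
    have h4 : ExpAt (f ∘ g) 1 ≤ ExpInfty (f ∘ g) :=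
      le_iSup₂ (f := fun (s : ℝ) (_ : (0:ℝ) < s) => ExpAt (f ∘ g) s) 1 one_pos
    calc (0:ENNReal) < ENNReal.ofReal (1/3) := by
          rw [ENNReal.ofReal_pos]; norm_num
      _ ≤ _ := le_trans h3 h4
  have embf : ∃ L > (0:ℝ), ∀ p p' : LogShiftedQuadrant,
      dist (f p) (f p') ≥ dist p p' / L - L := by
    refine ⟨1, one_pos, fun p p' => ?_⟩
    rw [fd]
    have := dist_nonneg (x := p) (y := p')
    rw [div_one]
    linarith
  have embg : ∃ L > (0:ℝ), ∀ q q' : LogShiftedQuadrantWithAxis,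
      dist (g q) (g q') ≥ dist q q' / L - L := by
    refine ⟨3, by norm_num, fun q q' => ?_⟩
    have := glow q q'
    have h0 : dist (g q) (g q') ≥ 0 := dist_nonneg
    linarith
  exact ⟨clf, clg, acgf, acfg, exp1, exp2, embf, embg, ⟨f, g, clf, clg, acgf, acfg⟩⟩
end

section
/- Let X and Y be real Banach spaces and let f : X → Y be an asymptotic coarse Lipschitz equivalence. Then the set ⋃_{n∈ℕ} (1/n)·f(X) is dense in Y. -/
/-- If `f : X → Y` is an asymptotic coarse Lipschitz equivalence of real
Banach spaces, then `⋃_{n ≥ 1} (1/n)·f(X)` is dense in `Y`. -/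
theorem asympCLEquiv_union_smul_range_dense {X Y : Type*}
    [NormedAddCommGroup X] [NormedSpace ℝ X] [CompleteSpace X]
    [NormedAddCommGroup Y] [NormedSpace ℝ Y] [CompleteSpace Y]
    (f : X → Y) (hf : IsAsympCLEquiv f) :
    Dense (⋃ (n : ℕ) (_ : 0 < n), (fun y : Y => ((n : ℝ))⁻¹ • y) '' Set.range f) := by
  obtain ⟨g, _, _, _, h2⟩ := hf
  set s : Set Y := ⋃ (n : ℕ) (_ : 0 < n), (fun y : Y => ((n : ℝ))⁻¹ • y) '' Set.range f
    with hs
  have hmem : ∀ (n : ℕ), 0 < n → ∀ x : X, ((n : ℝ))⁻¹ • f x ∈ s := by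
    intro n hn x
    exact Set.mem_iUnion.2 ⟨n, Set.mem_iUnion.2 ⟨hn, ⟨f x, ⟨x, rfl⟩, rfl⟩⟩⟩
  rw [Metric.dense_iff]
  intro y ε hε
  by_cases htriv : ∀ v : Y, v = (0 : Y)
  · refine ⟨_, ?_, hmem 1 one_pos (g y)⟩
    rw [Metric.mem_ball, htriv (((1:ℕ) : ℝ)⁻¹ • f (g y)), htriv y]
    simpa using hε
  · push_neg at htriv
    obtain ⟨u, hu⟩ := htriv
    have : Nontrivial Y := ⟨⟨u, 0, hu⟩⟩
    rcases h2 with hb | ⟨y0, h2⟩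
    · exact absurd hb (NormedSpace.unbounded_univ ℝ Y)
    -- key approximation lemma for nonzero targets
    have key : ∀ y' : Y, y' ≠ 0 → ∀ δ > (0 : ℝ), ∃ z ∈ s, dist z y' < δ := by
      intro y' hy' δ hδ
      have hny' : (0 : ℝ) < ‖y'‖ := norm_pos_iff.2 hy'
      set ε₁ : ℝ := δ / (‖y'‖ + ‖y0‖ + 1) with hε₁
      have hden : (0 : ℝ) < ‖y'‖ + ‖y0‖ + 1 := by positivity
      have hε₁pos : 0 < ε₁ := div_pos hδ hden
      obtain ⟨R, hR, hRest⟩ := h2 ε₁ hε₁pos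
      obtain ⟨m, hm⟩ := exists_nat_ge ((R + ‖y0‖) / ‖y'‖)
      set n : ℕ := m + 1 with hn
      have hnpos : 0 < n := Nat.succ_pos m
      have hnR : (0 : ℝ) < (n : ℝ) := by exact_mod_cast hnpos
      have hnge : (R + ‖y0‖) / ‖y'‖ ≤ (n : ℝ) := by
        refine hm.trans ?_
        exact_mod_cast Nat.le_succ m
      have hnbig : R + ‖y0‖ ≤ (n : ℝ) * ‖y'‖ := by
        rw [div_le_iff₀ hny'] at hnge
        linarith
      set v : Y := (n : ℝ) • y' with hv
      have hvnorm : ‖v‖ = (n : ℝ) * ‖y'‖ := by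
        rw [hv, norm_smul, Real.norm_eq_abs, abs_of_pos hnR]
      have hvfar : R ≤ dist v y0 := by
        have h1 : ‖v‖ - ‖y0‖ ≤ ‖v - y0‖ := norm_sub_norm_le v y0
        rw [← dist_eq_norm, hvnorm] at h1
        linarith
      have hest := hRest v hvfar
      have hdistv : dist v y0 ≤ (n : ℝ) * ‖y'‖ + ‖y0‖ := by
        rw [dist_eq_norm]
        calc ‖v - y0‖ ≤ ‖v‖ + ‖y0‖ := norm_sub_le _ _
        _ = (n : ℝ) * ‖y'‖ + ‖y0‖ := by rw [hvnorm]
      refine ⟨((n : ℝ))⁻¹ • f (g v), hmem n hnpos (g v), ?_⟩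
      have hy'eq : y' = ((n : ℝ))⁻¹ • v := by
        rw [hv, smul_smul, inv_mul_cancel₀ (ne_of_gt hnR), one_smul]
      calc dist (((n : ℝ))⁻¹ • f (g v)) y'
          = dist (((n : ℝ))⁻¹ • f (g v)) (((n : ℝ))⁻¹ • v) := by rw [← hy'eq]
        _ = |((n : ℝ))⁻¹| * dist (f (g v)) v := dist_smul₀ _ _ _
        _ = ((n : ℝ))⁻¹ * dist (f (g v)) v := by
            rw [abs_of_pos (inv_pos.2 hnR)]
        _ ≤ ((n : ℝ))⁻¹ * (ε₁ * dist v y0) := by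
            have := hest
            simp only [Function.comp_apply, id] at this
            exact mul_le_mul_of_nonneg_left this (le_of_lt (inv_pos.2 hnR))
        _ ≤ ((n : ℝ))⁻¹ * (ε₁ * ((n : ℝ) * ‖y'‖ + ‖y0‖)) := by
            have := mul_le_mul_of_nonneg_left hdistv (le_of_lt hε₁pos)
            exact mul_le_mul_of_nonneg_left this (le_of_lt (inv_pos.2 hnR))
        _ = ε₁ * (‖y'‖ + ((n : ℝ))⁻¹ * ‖y0‖) := by
            rw [mul_left_comm, mul_add, inv_mul_cancel_left₀ (ne_of_gt hnR)]
        _ ≤ ε₁ * (‖y'‖ + ‖y0‖) := by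
            apply mul_le_mul_of_nonneg_left _ (le_of_lt hε₁pos)
            have h1n : ((n : ℝ))⁻¹ ≤ 1 := by
              rw [inv_le_one_iff₀]
              right
              exact_mod_cast Nat.one_le_iff_ne_zero.2 (Nat.succ_ne_zero m)
            have : ((n : ℝ))⁻¹ * ‖y0‖ ≤ 1 * ‖y0‖ :=
              mul_le_mul_of_nonneg_right h1n (norm_nonneg _)
            linarith
        _ < ε₁ * (‖y'‖ + ‖y0‖ + 1) := by
            apply mul_lt_mul_of_pos_left _ hε₁pos
            linarith
        _ = δ := by
            rw [hε₁, div_mul_cancel₀ _ (ne_of_gt hden)]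
    -- pick a nonzero y' with dist y' y ≤ ε / 2
    obtain ⟨y', hy'0, hy'near⟩ : ∃ y' : Y, y' ≠ 0 ∧ dist y' y ≤ ε / 2 := by
      by_cases hy : y = 0
      · refine ⟨(ε / (4 * ‖u‖)) • u, ?_, ?_⟩
        · have hupos : (0 : ℝ) < ‖u‖ := norm_pos_iff.2 hu
          have : (ε / (4 * ‖u‖)) ≠ 0 := by positivity
          exact smul_ne_zero this hu
        · have hupos : (0 : ℝ) < ‖u‖ := norm_pos_iff.2 hu
          rw [hy, dist_zero_right, norm_smul, Real.norm_eq_abs,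
            abs_of_pos (by positivity : (0:ℝ) < ε / (4 * ‖u‖))]
          rw [div_mul_eq_mul_div, mul_comm]
          rw [div_le_div_iff₀ (by positivity) (by norm_num)]
          ring_nf
          nlinarith
      · exact ⟨y, hy, by simp [le_of_lt, half_pos hε]⟩
    obtain ⟨z, hzs, hz⟩ := key y' hy'0 (ε / 2) (half_pos hε)
    refine ⟨z, ?_, hzs⟩
    rw [Metric.mem_ball]
    calc dist z y ≤ dist z y' + dist y' y := dist_triangle _ _ _
      _ < ε / 2 + ε / 2 := by linarith
      _ = ε := by ring
end

section
/- Let X and Y be real Banach spaces that are asymptotically coarse Lipschitz equivalent. If X is finite dimensional, then Y is finite dimensional and dim(X) = dim(Y). -/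
open Metric MeasureTheory Module Set
open scoped ENNReal NNReal

section Packing

variable {E : Type*} [NormedAddCommGroup E] [NormedSpace ℝ E] [FiniteDimensional ℝ E]

lemma packing_upper {c : E} {R d : ℝ} (hd : 0 < d) (hR : 0 ≤ R)
    (S : Finset E) (hS : ∀ x ∈ S, x ∈ closedBall c R)
    (hsep : ∀ x ∈ S, ∀ y ∈ S, x ≠ y → d ≤ dist x y) :
    (S.card : ℝ) ≤ ((R + d / 3) / (d / 3)) ^ (finrank ℝ E) := by
  borelize E
  set n := finrank ℝ E with hn
  set μ : Measure E := (finBasis ℝ E).addHaar with hμ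
  have hd3 : (0:ℝ) < d / 3 := by linarith
  have hB0 : μ (ball (0:E) 1) ≠ 0 := (measure_ball_pos μ 0 one_pos).ne'
  have hBtop : μ (ball (0:E) 1) ≠ ⊤ :=
    ((measure_mono ball_subset_closedBall).trans_lt measure_closedBall_lt_top).ne
  have hdisj : (↑S : Set E).PairwiseDisjoint fun x => closedBall x (d / 3) := by
    intro x hx y hy hxy
    exact closedBall_disjoint_closedBall (by have := hsep x hx y hy hxy; linarith)
  have hμU : μ (⋃ x ∈ S, closedBall x (d / 3)) = ∑ x ∈ S, μ (closedBall x (d / 3)) :=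
    measure_biUnion_finset hdisj fun x _ => measurableSet_closedBall
  have hsub : (⋃ x ∈ S, closedBall x (d / 3)) ⊆ closedBall c (R + d / 3) := by
    refine Set.iUnion₂_subset fun x hx => ?_
    refine closedBall_subset_closedBall' ?_
    have := hS x hx
    rw [mem_closedBall] at this
    linarith
  have hval : ∀ x : E, μ (closedBall x (d/3)) = ENNReal.ofReal ((d/3) ^ n) * μ (ball 0 1) :=
    fun x => Measure.addHaar_closedBall μ x hd3.le
  have key : (S.card : ℝ≥0∞) * ENNReal.ofReal ((d/3) ^ n) * μ (ball 0 1)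
      ≤ ENNReal.ofReal ((R + d/3) ^ n) * μ (ball 0 1) := by
    calc (S.card : ℝ≥0∞) * ENNReal.ofReal ((d/3) ^ n) * μ (ball 0 1)
        = ∑ _x ∈ S, ENNReal.ofReal ((d/3) ^ n) * μ (ball 0 1) := by
          rw [Finset.sum_const, nsmul_eq_mul, mul_assoc]
      _ = ∑ x ∈ S, μ (closedBall x (d/3)) := by
          refine Finset.sum_congr rfl fun x _ => (hval x).symm
      _ = μ (⋃ x ∈ S, closedBall x (d / 3)) := hμU.symm
      _ ≤ μ (closedBall c (R + d/3)) := measure_mono hsub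
      _ = ENNReal.ofReal ((R + d/3) ^ n) * μ (ball 0 1) :=
          Measure.addHaar_closedBall μ c (by linarith)
  have key2 : (S.card : ℝ≥0∞) * ENNReal.ofReal ((d/3) ^ n) ≤ ENNReal.ofReal ((R + d/3) ^ n) :=
    (ENNReal.mul_le_mul_iff_left hB0 hBtop).1 key
  have key3 : (S.card : ℝ) * (d/3) ^ n ≤ (R + d/3) ^ n := by
    rw [← ENNReal.ofReal_natCast (S.card), ← ENNReal.ofReal_mul (by positivity)] at key2
    exact (ENNReal.ofReal_le_ofReal_iff (by positivity)).1 key2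
  have hpow : (0:ℝ) < (d/3) ^ n := pow_pos hd3 n
  rw [div_pow, le_div_iff₀ hpow]
  exact key3

lemma packing_finite {c : E} {R d : ℝ} (hd : 0 < d) (hR : 0 ≤ R)
    {T : Set E} (hT : T ⊆ closedBall c R)
    (hsep : ∀ x ∈ T, ∀ y ∈ T, x ≠ y → d ≤ dist x y) : T.Finite := by
  by_contra hinf
  have hinf : T.Infinite := hinf
  obtain ⟨N, hN⟩ := exists_nat_gt (((R + d / 3) / (d / 3)) ^ (finrank ℝ E))
  obtain ⟨t, htT, htcard⟩ := hinf.exists_subset_card_eq N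
  have := packing_upper hd hR t (fun x hx => hT (htT hx))
    (fun x hx y hy hxy => hsep x (htT hx) y (htT hy) hxy)
  rw [htcard] at this
  linarith

lemma packing_lower (c : E) {R d : ℝ} (hd : 0 < d) (hdR : d ≤ R) :
    ∃ S : Finset E, (∀ x ∈ S, x ∈ closedBall c R) ∧
      (∀ x ∈ S, ∀ y ∈ S, x ≠ y → d ≤ dist x y) ∧
      (R / d) ^ (finrank ℝ E) ≤ (S.card : ℝ) := by
  borelize E
  have hR : 0 < R := hd.trans_le hdR
  set n := finrank ℝ E with hn
  set 𝒮 : Set (Set E) :=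
    {T | T ⊆ closedBall c R ∧ ∀ x ∈ T, ∀ y ∈ T, x ≠ y → d ≤ dist x y} with h𝒮
  have hchainU : ∀ ch ⊆ 𝒮, IsChain (· ⊆ ·) ch → ch.Nonempty →
      ∃ ub ∈ 𝒮, ∀ s ∈ ch, s ⊆ ub := by
    intro ch hch hchain hne
    refine ⟨⋃₀ ch, ⟨?_, ?_⟩, fun s hs => subset_sUnion_of_mem hs⟩
    · exact sUnion_subset fun s hs => (hch hs).1
    · rintro x hx y hy hxy
      obtain ⟨s, hs, hxs⟩ := hx
      obtain ⟨t, ht, hyt⟩ := hy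
      rcases hchain.total hs ht with hst | hts
      · exact (hch ht).2 x (hst hxs) y hyt hxy
      · exact (hch hs).2 x hxs y (hts hyt) hxy
  have hbase : {c} ∈ 𝒮 := by
    refine ⟨singleton_subset_iff.2 (mem_closedBall_self hR.le), ?_⟩
    rintro x rfl y rfl hxy
    exact absurd rfl hxy
  obtain ⟨m, -, hm⟩ := zorn_subset_nonempty 𝒮 hchainU {c} hbase
  have hmem : m ∈ 𝒮 := hm.prop
  have hfin : m.Finite := packing_finite hd hR.le hmem.1 hmem.2
  have hcover : closedBall c R ⊆ ⋃ t ∈ m, closedBall t d := by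
    intro x hx
    by_contra hxc
    simp only [Set.mem_iUnion, mem_closedBall, not_exists, not_le] at hxc
    have hxm : x ∉ m := by
      intro hxm
      have h0 := hxc x hxm
      rw [dist_self] at h0
      linarith
    have hins : insert x m ∈ 𝒮 := by
      refine ⟨insert_subset hx hmem.1, ?_⟩
      rintro a (rfl | ha) b (rfl | hb) hab
      · exact absurd rfl hab
      · exact (hxc b hb).le
      · rw [dist_comm]; exact (hxc a ha).le
      · exact hmem.2 a ha b hb hab
    have := hm.2 hins (subset_insert x m)
    exact hxm (this (mem_insert x m))
  set μ : Measure E := (finBasis ℝ E).addHaar with hμ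
  have hB0 : μ (ball (0:E) 1) ≠ 0 := (measure_ball_pos μ 0 one_pos).ne'
  have hBtop : μ (ball (0:E) 1) ≠ ⊤ :=
    ((measure_mono ball_subset_closedBall).trans_lt measure_closedBall_lt_top).ne
  refine ⟨hfin.toFinset, ?_, ?_, ?_⟩
  · intro x hx; exact hmem.1 (hfin.mem_toFinset.1 hx)
  · intro x hx y hy hxy
    exact hmem.2 x (hfin.mem_toFinset.1 hx) y (hfin.mem_toFinset.1 hy) hxy
  · have hcov2 : closedBall c R ⊆ ⋃ x ∈ hfin.toFinset, closedBall x d := by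
      refine hcover.trans ?_
      intro x hx
      simp only [Set.mem_iUnion] at hx ⊢
      obtain ⟨t, ht, hxt⟩ := hx
      exact ⟨t, hfin.mem_toFinset.2 ht, hxt⟩
    have key : ENNReal.ofReal (R ^ n) * μ (ball 0 1)
        ≤ (hfin.toFinset.card : ℝ≥0∞) * ENNReal.ofReal (d ^ n) * μ (ball 0 1) := by
      calc ENNReal.ofReal (R ^ n) * μ (ball 0 1)
          = μ (closedBall c R) := (Measure.addHaar_closedBall μ c hR.le).symm
        _ ≤ μ (⋃ x ∈ hfin.toFinset, closedBall x d) := measure_mono hcov2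
        _ ≤ ∑ x ∈ hfin.toFinset, μ (closedBall x d) := measure_biUnion_finset_le _ _
        _ = (hfin.toFinset.card : ℝ≥0∞) * ENNReal.ofReal (d ^ n) * μ (ball 0 1) := by
            rw [Finset.sum_congr rfl fun x _ => Measure.addHaar_closedBall μ x hd.le,
              Finset.sum_const, nsmul_eq_mul, mul_assoc]
    have key2 : ENNReal.ofReal (R ^ n)
        ≤ (hfin.toFinset.card : ℝ≥0∞) * ENNReal.ofReal (d ^ n) :=
      (ENNReal.mul_le_mul_iff_left hB0 hBtop).1 key
    have key3 : R ^ n ≤ (hfin.toFinset.card : ℝ) * d ^ n := by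
      rw [← ENNReal.ofReal_natCast, ← ENNReal.ofReal_mul (by positivity)] at key2
      exact (ENNReal.ofReal_le_ofReal_iff (by positivity)).1 key2
    rw [div_pow, div_le_iff₀ (by positivity)]
    exact key3

end Packing

lemma count_bound {X Y : Type*} [NormedAddCommGroup X] [NormedSpace ℝ X]
    [NormedAddCommGroup Y] [NormedSpace ℝ Y] [FiniteDimensional ℝ X] [Nontrivial Y]
    {f : X → Y} {g : Y → X} (hf : CoarseLipschitz f) (hg : CoarseLipschitz g)
    (hfg : AsympClose (f ∘ g) id) :
    ∃ C : ℝ, 1 ≤ C ∧ ∀ ε : ℝ, 0 < ε → ε ≤ 1 → ∃ (cc : Y) (M : ℝ), 1 ≤ M ∧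
      ∀ S : Finset Y, (∀ y ∈ S, y ∈ closedBall cc M) →
        (∀ y ∈ S, ∀ y' ∈ S, y ≠ y' → ε * M ≤ dist y y') →
        (S.card : ℝ) ≤ (C / ε) ^ (finrank ℝ X) := by
  classical
  obtain ⟨Lf, hLf, hfL⟩ := hf
  obtain ⟨Lg, hLg, hgL⟩ := hg
  set L := max (max Lf Lg) 1 with hL
  have hL1 : (1:ℝ) ≤ L := le_max_right _ _
  have hL0 : (0:ℝ) < L := lt_of_lt_of_le one_pos hL1
  have hfL' : ∀ x x', dist (f x) (f x') ≤ L * dist x x' + L := by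
    intro x x'
    have h1 := hfL x x'
    have h2 : Lf ≤ L := le_trans (le_max_left _ _) (le_max_left _ _)
    nlinarith [dist_nonneg (x := x) (y := x')]
  have hgL' : ∀ y y', dist (g y) (g y') ≤ L * dist y y' + L := by
    intro y y'
    have h1 := hgL y y'
    have h2 : Lg ≤ L := le_trans (le_max_right _ _) (le_max_left _ _)
    nlinarith [dist_nonneg (x := y) (y := y')]
  rcases hfg with hbd | ⟨y0, hy0⟩
  · exact absurd hbd (NormedSpace.unbounded_univ ℝ Y)
  refine ⟨13 * L ^ 2, by nlinarith, ?_⟩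
  intro ε hε hε1
  obtain ⟨R, hRpos, hR⟩ := hy0 (ε / 100) (by linarith)
  obtain ⟨M, hM⟩ : ∃ M : ℝ, M = R + 100 * L / ε + 1 := ⟨_, rfl⟩
  have hLε : 0 < 100 * L / ε := by positivity
  have hM1 : 1 ≤ M := by rw [hM]; linarith
  have hM0 : 0 < M := lt_of_lt_of_le one_pos hM1
  have hRM : R ≤ M := by rw [hM]; linarith
  have hLM : 100 * L ≤ ε * M := by
    have he : ε * M = ε * R + 100 * L + ε := by
      rw [hM]; field_simp
    nlinarith
  obtain ⟨v, hv⟩ := exists_ne (0 : Y)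
  set u : Y := ‖v‖⁻¹ • v with hu
  have hunorm : ‖u‖ = 1 := by
    rw [hu, norm_smul, norm_inv, norm_norm, inv_mul_cancel₀ (norm_ne_zero_iff.2 hv)]
  set cc : Y := y0 + (11 * M) • u with hcc
  have hccy0 : dist cc y0 = 11 * M := by
    rw [hcc, dist_eq_norm, add_sub_cancel_left, norm_smul, hunorm, Real.norm_eq_abs,
      abs_of_pos (by linarith), mul_one]
  refine ⟨cc, M, hM1, ?_⟩
  intro S hSball hSsep
  have hfar : ∀ y ∈ S, R ≤ dist y y0 ∧ dist y y0 ≤ 12 * M := by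
    intro y hy
    have h1 : dist y cc ≤ M := hSball y hy
    have h2 := dist_triangle cc y y0
    have h3 := dist_triangle y cc y0
    rw [dist_comm cc y] at h2
    constructor
    · linarith
    · linarith
  obtain ⟨d, hd⟩ : ∃ d : ℝ, d = ε * M / (2 * L) := ⟨_, rfl⟩
  have hd0 : 0 < d := by rw [hd]; positivity
  have hgsep : ∀ y ∈ S, ∀ y' ∈ S, y ≠ y' → d ≤ dist (g y) (g y') := by
    intro y hy y' hy' hne
    have h1 := hR y (hfar y hy).1
    have h2 := hR y' (hfar y' hy').1
    simp only [Function.comp_apply, id_eq] at h1 h2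
    have h3 := hfL' (g y) (g y')
    have h4 := dist_triangle4 y (f (g y)) (f (g y')) y'
    have h5 : ε * M ≤ dist y y' := hSsep y hy y' hy' hne
    have h6 : dist y (f (g y)) = dist (f (g y)) y := dist_comm _ _
    have h7 : dist (f (g y')) y' = dist (f (g y')) y' := rfl
    have e1 : ε / 100 * dist y y0 ≤ ε / 100 * (12 * M) :=
      mul_le_mul_of_nonneg_left (hfar y hy).2 (by positivity)
    have e2 : ε / 100 * dist y' y0 ≤ ε / 100 * (12 * M) :=
      mul_le_mul_of_nonneg_left (hfar y' hy').2 (by positivity)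
    rw [hd, div_le_iff₀ (by positivity)]
    rw [h6] at h4
    nlinarith [dist_nonneg (x := g y) (y := g y')]
  set T : Finset X := S.image g with hT
  have hinj : Set.InjOn g ↑S := by
    intro y hy y' hy' hgy
    by_contra hne
    have h0 := hgsep y hy y' hy' hne
    rw [hgy, dist_self] at h0
    linarith
  have hcard : T.card = S.card := Finset.card_image_of_injOn hinj
  have hTball : ∀ x ∈ T, x ∈ closedBall (g cc) (2 * L * M) := by
    intro x hx
    obtain ⟨y, hy, rfl⟩ := Finset.mem_image.1 hx
    have h1 := hgL' y cc
    have h2 : dist y cc ≤ M := hSball y hy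
    rw [mem_closedBall]
    nlinarith
  have hTsep : ∀ x ∈ T, ∀ x' ∈ T, x ≠ x' → d ≤ dist x x' := by
    intro x hx x' hx' hne
    obtain ⟨y, hy, rfl⟩ := Finset.mem_image.1 hx
    obtain ⟨y', hy', rfl⟩ := Finset.mem_image.1 hx'
    exact hgsep y hy y' hy' fun h => hne (by rw [h])
  have hbound := packing_upper hd0 (by positivity) T hTball hTsep
  rw [hcard] at hbound
  refine hbound.trans ?_
  have heq : (2 * L * M + d / 3) / (d / 3) = 12 * L ^ 2 / ε + 1 := by
    rw [hd]
    field_simp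
    ring
  have hone : 1 ≤ L ^ 2 / ε := by
    rw [le_div_iff₀ hε]
    nlinarith
  have hbase : (2 * L * M + d / 3) / (d / 3) ≤ 13 * L ^ 2 / ε := by
    rw [heq]
    have : 13 * L ^ 2 / ε = 12 * L ^ 2 / ε + L ^ 2 / ε := by ring
    rw [this]
    linarith
  exact pow_le_pow_left₀ (by positivity) hbase _

lemma rank_le_of_equiv {X Y : Type*} [NormedAddCommGroup X] [NormedSpace ℝ X]
    [NormedAddCommGroup Y] [NormedSpace ℝ Y] [FiniteDimensional ℝ X] [FiniteDimensional ℝ Y]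
    {f : X → Y} {g : Y → X} (hf : CoarseLipschitz f) (hg : CoarseLipschitz g)
    (hfg : AsympClose (f ∘ g) id) : finrank ℝ Y ≤ finrank ℝ X := by
  rcases subsingleton_or_nontrivial Y with hY | hY
  · simp [finrank_zero_of_subsingleton]
  obtain ⟨C, hC1, hCb⟩ := count_bound hf hg hfg
  by_contra hlt
  push_neg at hlt
  set n := finrank ℝ X with hn
  set m := finrank ℝ Y with hm
  have hnm : n + 1 ≤ m := hlt
  have hC0 : (0:ℝ) < C := lt_of_lt_of_le one_pos hC1
  have hCn : (1:ℝ) ≤ C ^ n := one_le_pow₀ hC1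
  obtain ⟨ε, hε⟩ : ∃ ε : ℝ, ε = 1 / (C ^ n + 1) := ⟨_, rfl⟩
  have hε0 : 0 < ε := by rw [hε]; positivity
  have hε1 : ε ≤ 1 := by
    rw [hε, div_le_one (by positivity)]
    linarith
  obtain ⟨cc, M, hM1, hb⟩ := hCb ε hε0 hε1
  have hM0 : (0:ℝ) < M := lt_of_lt_of_le one_pos hM1
  obtain ⟨S, hS1, hS2, hS3⟩ := packing_lower cc (d := ε * M) (by positivity) (by nlinarith)
  have h1 := hb S hS1 hS2
  have heq : M / (ε * M) = C ^ n + 1 := by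
    rw [hε]; field_simp
  rw [heq] at hS3
  have hCe : C / ε = C * (C ^ n + 1) := by
    rw [hε]; field_simp
  rw [hCe] at h1
  have hCpos : (0:ℝ) < C ^ n + 1 := by positivity
  have h3 : (C ^ n + 1) ^ (n + 1) ≤ (C ^ n + 1) ^ m :=
    pow_le_pow_right₀ (by linarith) hnm
  have h4 : (C ^ n + 1) ^ (n + 1) ≤ (C * (C ^ n + 1)) ^ n := by
    calc (C ^ n + 1) ^ (n + 1) ≤ (C ^ n + 1) ^ m := h3
      _ ≤ (S.card : ℝ) := hS3
      _ ≤ (C * (C ^ n + 1)) ^ n := h1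
  rw [mul_pow, pow_succ] at h4
  nlinarith [pow_pos hCpos n]

/-- If real Banach spaces `X` and `Y` are asymptotically coarse
Lipschitz equivalent and `X` is finite dimensional, then `Y` is finite dimensional and
`dim X = dim Y`. -/
theorem asympCLEquivalent_finiteDimensional {X Y : Type*}
    [NormedAddCommGroup X] [NormedSpace ℝ X] [CompleteSpace X]
    [NormedAddCommGroup Y] [NormedSpace ℝ Y] [CompleteSpace Y]
    (h : AsympCLEquivalent X Y) (hX : FiniteDimensional ℝ X) :
    FiniteDimensional ℝ Y ∧ Module.finrank ℝ X = Module.finrank ℝ Y := by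
  classical
  obtain ⟨f, g, hf, hg, hgf, hfg⟩ := h
  have hYfin : FiniteDimensional ℝ Y := by
    by_contra hY
    have hnt : Nontrivial Y := by
      by_contra hnt
      rw [not_nontrivial_iff_subsingleton] at hnt
      exact hY (Module.Finite.of_basis (Basis.empty _ : Basis Empty ℝ Y))
    obtain ⟨Rr, u, hRr, hu1, husep⟩ := exists_seq_norm_le_one_le_norm_sub (𝕜 := ℝ) (E := Y) hY
    obtain ⟨C, hC1, hCb⟩ := count_bound hf hg hfg
    have hRr0 : (0:ℝ) < Rr := lt_trans one_pos hRr
    obtain ⟨ε, hε⟩ : ∃ ε : ℝ, ε = Rr⁻¹ := ⟨_, rfl⟩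
    have hε0 : 0 < ε := by rw [hε]; positivity
    have hε1 : ε ≤ 1 := by rw [hε]; exact inv_le_one_of_one_le₀ hRr.le
    obtain ⟨cc, M, hM1, hb⟩ := hCb ε hε0 hε1
    have hM0 : (0:ℝ) < M := lt_of_lt_of_le one_pos hM1
    obtain ⟨N, hN⟩ := exists_nat_gt ((C / ε) ^ (finrank ℝ X))
    set φ : ℕ → Y := fun i => cc + (M / Rr) • u i with hφ
    have hsepφ : ∀ i j, i ≠ j → ε * M ≤ dist (φ i) (φ j) := by
      intro i j hij
      rw [hφ]
      simp only
      rw [dist_eq_norm, add_sub_add_left_eq_sub, ← smul_sub, norm_smul, Real.norm_eq_abs,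
        abs_of_pos (by positivity)]
      have h1 : (1:ℝ) ≤ ‖u i - u j‖ := husep hij
      have h2 : ε * M = M / Rr := by rw [hε]; field_simp
      rw [h2]
      nlinarith [div_pos hM0 hRr0]
    have hballφ : ∀ i, φ i ∈ closedBall cc M := by
      intro i
      rw [hφ]
      simp only
      rw [mem_closedBall, dist_eq_norm, add_sub_cancel_left, norm_smul, Real.norm_eq_abs,
        abs_of_pos (by positivity)]
      have := hu1 i
      rw [div_mul_eq_mul_div, div_le_iff₀ hRr0]
      nlinarith [div_pos hM0 hRr0]
    have hinjφ : Set.InjOn φ ↑(Finset.range N) := by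
      intro i _ j _ hφij
      by_contra hij
      have h0 := hsepφ i j hij
      rw [hφij, dist_self] at h0
      nlinarith
    set S : Finset Y := (Finset.range N).image φ with hS
    have hcard : S.card = N := by
      rw [hS, Finset.card_image_of_injOn hinjφ, Finset.card_range]
    have hball : ∀ y ∈ S, y ∈ closedBall cc M := by
      intro y hy
      obtain ⟨i, _, rfl⟩ := Finset.mem_image.1 hy
      exact hballφ i
    have hsep : ∀ y ∈ S, ∀ y' ∈ S, y ≠ y' → ε * M ≤ dist y y' := by
      intro y hy y' hy' hne
      obtain ⟨i, _, rfl⟩ := Finset.mem_image.1 hy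
      obtain ⟨j, _, rfl⟩ := Finset.mem_image.1 hy'
      exact hsepφ i j fun hij => hne (by rw [hij])
    have := hb S hball hsep
    rw [hcard] at this
    linarith
  refine ⟨hYfin, ?_⟩
  exact le_antisymm (rank_le_of_equiv hg hf hgf) (rank_le_of_equiv hf hg hfg)
end
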